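/- For every natural number D ≥ 2, the following identity of convergent series holds in ℝ: 2 · ∑_{d=0}^{D−1} ∑_{k=0}^{∞} 3^k / 3^(1 + d + D·k) = (3^D − 1) / (3^D − 3). This is the asymptotic (n → ∞) transmission-delay-optimality factor of bandwidth-optimal Trivance on a D-dimensional torus, relative to the ideal cost mβ/D. -/

import Mathlib

/-- **Asymptotic transmission-delay factor of bandwidth-optimal Trivance on a
`D`-dimensional torus** (`D ≥ 2`), relative to the ideal cost `mβ/D`: in global
step `k` within dimension offset `d` the transmitted data fraction is
`1/3^(1+d+D·k)` and the per-link congestion is `3^k`; the factor `2` accounts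
for the Reduce-Scatter and AllGather phases. As `n → ∞`,
`2 · ∑_{d=0}^{D-1} ∑_{k=0}^{∞} 3^k / 3^(1+d+D·k) = (3^D - 1)/(3^D - 3)`. -/
theorem trivance_bw_tx_delay_torus (D : ℕ) (hD : 2 ≤ D) :
    2 * ∑ d ∈ Finset.range D, ∑' k : ℕ, (3 : ℝ) ^ k / 3 ^ (1 + d + D * k)
      = ((3 : ℝ) ^ D - 1) / ((3 : ℝ) ^ D - 3) := by
  have h3D : (9 : ℝ) ≤ (3 : ℝ) ^ D := by
    calc (9 : ℝ) = 3 ^ 2 := by norm_num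
    _ ≤ 3 ^ D := by
      apply pow_le_pow_right₀ (by norm_num) hD
  set r : ℝ := 3 / 3 ^ D with hr
  have hr0 : 0 ≤ r := by positivity
  have hr1 : r < 1 := by
    rw [hr, div_lt_one (by positivity)]; linarith
  have hterm : ∀ d ∈ Finset.range D,
      ∑' k : ℕ, (3 : ℝ) ^ k / 3 ^ (1 + d + D * k)
        = (1 / 3 ^ (1 + d)) * (1 - r)⁻¹ := by
    intro d _
    have : ∀ k : ℕ, (3 : ℝ) ^ k / 3 ^ (1 + d + D * k)
        = (1 / 3 ^ (1 + d)) * r ^ k := by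
      intro k
      rw [hr, div_pow, pow_add, pow_mul]
      field_simp
    simp_rw [this]
    rw [tsum_mul_left, tsum_geometric_of_lt_one hr0 hr1]
  rw [Finset.sum_congr rfl hterm, ← Finset.sum_mul]
  have hsum : ∑ d ∈ Finset.range D, (1 / (3:ℝ) ^ (1 + d))
      = (1 - (1/3) ^ D) / 2 := by
    have hd : ∀ d : ℕ, (1:ℝ) / 3 ^ (1 + d) = (1/3) * (1/3)^d := by
      intro d
      rw [one_div_pow, pow_add, pow_one, one_div_mul_one_div]
    simp_rw [hd]
    rw [← Finset.mul_sum, geom_sum_eq (by norm_num : (1/3 : ℝ) ≠ 1)]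
    field_simp
    ring
  rw [hsum, hr]
  have h1 : (1:ℝ) - 3 / 3 ^ D = (3 ^ D - 3) / 3 ^ D := by
    field_simp
  rw [h1]
  have h2 : ((3:ℝ) ^ D - 3) ≠ 0 := by linarith
  have h3 : ((3:ℝ) ^ D) ≠ 0 := by positivity
  rw [one_div_pow]
  field_simp
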